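/- (Theorem 2, part (ii)) Every complex eigenvalue λ of M with λ ≠ 0 and λ³ ≠ −1 (equivalently λ ∉ {−1, (1+√3 i)/2, (1−√3 i)/2}) is also an eigenvalue of the 2nd-order non-backtracking matrix B^(2) of G. -/

import Mathlib

open Matrix ENNReal

namespace PercNB

variable {V : Type*} [Fintype V] [DecidableEq V]

/-- `p : Fin (g+1) → V` is a length-`g` directed path in the simple graph `G`:
`g+1` pairwise distinct vertices with consecutive vertices adjacent. -/
def IsDiPath (G : SimpleGraph V) (g : ℕ) (p : Fin (g+1) → V) : Prop :=
  Function.Injective p ∧ ∀ k : Fin g, G.Adj (p k.castSucc) (p k.succ)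

instance (G : SimpleGraph V) [DecidableRel G.Adj] (g : ℕ) :
    DecidablePred (IsDiPath G g) := fun p =>
  inferInstanceAs (Decidable (Function.Injective p ∧ ∀ k : Fin g, G.Adj (p k.castSucc) (p k.succ)))

/-- The type of length-`g` directed paths of `G`. -/
abbrev DiPath (G : SimpleGraph V) (g : ℕ) := {p : Fin (g+1) → V // IsDiPath G g p}

/-- The `g`-th-order non-backtracking matrix `B^(g)` of `G`, indexed by the length-`g`
directed paths of `G`: the `(p, q)` entry is `1` if `q k = p (k+1)` for `1 ≤ k ≤ g` and
`(p 1, …, p (g+1), q (g+1))` is a length-`(g+1)` directed path, and `0` otherwise. -/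
def NBM (G : SimpleGraph V) [DecidableRel G.Adj] (g : ℕ) :
    Matrix (DiPath G g) (DiPath G g) ℂ := fun p q =>
  if (∀ k : Fin g, q.1 k.castSucc = p.1 k.succ) ∧
      IsDiPath G (g+1) (Fin.snoc p.1 (q.1 (Fin.last g))) then 1 else 0

/-- The spectral radius of a finite square complex matrix:
the maximum modulus of its eigenvalues (`0` if the index type is empty). -/
noncomputable def specRad {n : Type*} [Fintype n] [DecidableEq n] (X : Matrix n n ℂ) : ℝ≥0∞ :=
  spectralRadius ℂ X

/-- `c : Fin k → V` is a simple cycle of length `k ≥ 3` in `G`: pairwise distinct vertices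
with `c t` adjacent to `c (t+1)` for `1 ≤ t ≤ k-1` and `c k` adjacent to `c 1`. -/
def IsSimpleCycle (G : SimpleGraph V) (k : ℕ) (c : Fin k → V) : Prop :=
  3 ≤ k ∧ Function.Injective c ∧
    ∀ t : Fin k, G.Adj (c t) (c ⟨(t.val + 1) % k, Nat.mod_lt _ t.pos⟩)

/-- The arc relation of the digraph `G^(g)` on the length-`g` directed paths of `G`:
`p → q` exactly when `B^(g)_{p,q} = 1`. -/
def NBArc (G : SimpleGraph V) (g : ℕ) (p q : DiPath G g) : Prop :=
  (∀ k : Fin g, q.1 k.castSucc = p.1 k.succ) ∧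
    IsDiPath G (g+1) (Fin.snoc p.1 (q.1 (Fin.last g)))

/-- The arc relation of the line digraph `L(G^(g-1))` (for `g ≥ 1`), under the identification
of its vertices — the arcs `(i₁,…,i_g) → (i₂,…,i_{g+1})` of `G^(g-1)` — with the length-`g`
directed paths `(i₁,…,i_{g+1})` of `G`: there is an arc `p → q` exactly when the arc
corresponding to `p` ends at the tail of the arc corresponding to `q`, i.e. when
`q k = p (k+1)` for `1 ≤ k ≤ g`. -/
def LineArc (G : SimpleGraph V) (g : ℕ) (p q : DiPath G g) : Prop :=
  ∀ k : Fin g, q.1 k.castSucc = p.1 k.succ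

/-- `c : Fin k → α` is a directed cycle of length `k` with respect to the arc relation `r`:
`k` pairwise distinct vertices with an arc from each to the cyclically next one. -/
def IsDiCycle {α : Type*} (r : α → α → Prop) (k : ℕ) (c : Fin k → α) : Prop :=
  Function.Injective c ∧ ∀ t : Fin k, r (c t) (c ⟨(t.val + 1) % k, Nat.mod_lt _ t.pos⟩)

/-- The type of directed edges of `G`: ordered pairs of adjacent vertices. -/
abbrev DiEdge (G : SimpleGraph V) := {e : V × V // G.Adj e.1 e.2}

/-- The standard non-backtracking matrix `B = B^(1)`, indexed by directed edges:
`B_{(i,j),(k,l)} = 1` iff `j = k`, `l ≠ i` and `j` is adjacent to `l`. -/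
def Bmat (G : SimpleGraph V) [DecidableRel G.Adj] : Matrix (DiEdge G) (DiEdge G) ℂ :=
  fun e f => if e.1.2 = f.1.1 ∧ f.1.2 ≠ e.1.1 ∧ G.Adj e.1.2 f.1.2 then 1 else 0

/-- `(ΔB₁)_{(i,j),(k,l)} = 1` iff `B_{(i,j),(k,l)} = 1` and `i` is adjacent to `l`. -/
def dB1 (G : SimpleGraph V) [DecidableRel G.Adj] : Matrix (DiEdge G) (DiEdge G) ℂ :=
  fun e f => if (e.1.2 = f.1.1 ∧ f.1.2 ≠ e.1.1 ∧ G.Adj e.1.2 f.1.2) ∧ G.Adj e.1.1 f.1.2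
    then 1 else 0

/-- `(ΔB₂)_{(i,j),(k,l)} = 1` iff `l = i` and `j` is adjacent to `k`. -/
def dB2 (G : SimpleGraph V) [DecidableRel G.Adj] : Matrix (DiEdge G) (DiEdge G) ℂ :=
  fun e f => if f.1.2 = e.1.1 ∧ G.Adj e.1.2 f.1.1 then 1 else 0

/-- The diagonal matrix `D_Δ` whose `((i,j),(i,j))` entry is the number of common
neighbours of `i` and `j`. -/
noncomputable def Ddel (G : SimpleGraph V) [DecidableRel G.Adj] :
    Matrix (DiEdge G) (DiEdge G) ℂ :=
  Matrix.diagonal fun e =>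
    ((Finset.univ.filter fun v => G.Adj e.1.1 v ∧ G.Adj e.1.2 v).card : ℂ)

/-- The `8E × 8E` block matrix
`M = [[B, −ΔB₂, D_Δ − I, B − ΔB₁], [I, 0, 0, 0], [0, I, 0, 0], [0, 0, I, 0]]`. -/
noncomputable def Mmat (G : SimpleGraph V) [DecidableRel G.Adj] :
    Matrix ((DiEdge G ⊕ DiEdge G) ⊕ (DiEdge G ⊕ DiEdge G))
      ((DiEdge G ⊕ DiEdge G) ⊕ (DiEdge G ⊕ DiEdge G)) ℂ :=
  Matrix.fromBlocks
    (Matrix.fromBlocks (Bmat G) (-(dB2 G)) 1 0)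
    (Matrix.fromBlocks (Ddel G - 1) (Bmat G - dB1 G) 0 0)
    (Matrix.fromBlocks 0 1 0 0)
    (Matrix.fromBlocks 0 0 1 0)

/-- `x_{(i,j)} = Σ_k ψ_{(i,j,k)}`, the sum over all vertices `k` adjacent to `j` with
`k ≠ i`; equivalently, the sum of `ψ` over all length-2 directed paths starting `(i,j,·)`. -/
noncomputable def xvec (G : SimpleGraph V) [DecidableRel G.Adj] (ψ : DiPath G 2 → ℂ) :
    DiEdge G → ℂ := fun e =>
  ∑ p ∈ Finset.univ.filter (fun p : DiPath G 2 => p.1 0 = e.1.1 ∧ p.1 1 = e.1.2), ψ p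

/-- `y_{(i,j)} = Σ_k ψ_{(i,j,k)}`, the sum over all vertices `k` adjacent to both `i`
and `j`. -/
noncomputable def yvec (G : SimpleGraph V) [DecidableRel G.Adj] (ψ : DiPath G 2 → ℂ) :
    DiEdge G → ℂ := fun e =>
  ∑ p ∈ Finset.univ.filter
    (fun p : DiPath G 2 => p.1 0 = e.1.1 ∧ p.1 1 = e.1.2 ∧ G.Adj e.1.1 (p.1 2)), ψ p

/-- The block vector `z = (x, λ⁻¹x, λ⁻²x, λ⁻³x)`. -/
noncomputable def blockVec {G : SimpleGraph V} (lam : ℂ) (x : DiEdge G → ℂ) :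
    (DiEdge G ⊕ DiEdge G) ⊕ (DiEdge G ⊕ DiEdge G) → ℂ :=
  Sum.elim (Sum.elim x (lam⁻¹ • x)) (Sum.elim ((lam ^ 2)⁻¹ • x) ((lam ^ 3)⁻¹ • x))

/-- The vector `ψ` built from `x`:
`ψ_{(i,j,k)} = (λ²x_{(j,k)} − λx_{(k,i)} + x_{(i,j)})/(λ³+1)` if `i` and `k` are adjacent,
and `ψ_{(i,j,k)} = λ⁻¹ x_{(j,k)}` if `i` and `k` are not adjacent. -/
noncomputable def psiOf (G : SimpleGraph V) [DecidableRel G.Adj] (lam : ℂ)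
    (x : DiEdge G → ℂ) : DiPath G 2 → ℂ := fun p =>
  if h : G.Adj (p.1 0) (p.1 2) then
    (lam ^ 2 * x ⟨(p.1 1, p.1 2), by simpa using p.2.2 1⟩
      - lam * x ⟨(p.1 2, p.1 0), h.symm⟩
      + x ⟨(p.1 0, p.1 1), by simpa using p.2.2 0⟩) / (lam ^ 3 + 1)
  else lam⁻¹ * x ⟨(p.1 1, p.1 2), by simpa using p.2.2 1⟩

set_option linter.unusedSectionVars false
set_option linter.unusedVariables false
set_option maxHeartbeats 1000000

section AuxLemmas
variable (G : SimpleGraph V) [DecidableRel G.Adj]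

lemma spec_iff {n : Type*} [Fintype n] [DecidableEq n] (A : Matrix n n ℂ) (μ : ℂ) :
    μ ∈ spectrum ℂ A ↔ ∃ v, v ≠ 0 ∧ A *ᵥ v = μ • v := by
  rw [← AlgEquiv.spectrum_eq (Matrix.toLinAlgEquiv' (R := ℂ) (n := n)) A,
    ← Module.End.hasEigenvalue_iff_mem_spectrum]
  constructor
  · intro h
    obtain ⟨v, hv⟩ := h.exists_hasEigenvector
    exact ⟨v, hv.2, by simpa [Matrix.toLinAlgEquiv'_apply] using hv.1⟩
  · rintro ⟨v, hv0, hv⟩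
    exact Module.End.hasEigenvalue_of_hasEigenvector
      ⟨Module.End.mem_eigenspace_iff.2 (by simpa [Matrix.toLinAlgEquiv'_apply] using hv), hv0⟩

lemma mkPath {i j k : V} (hij : G.Adj i j) (hjk : G.Adj j k) (hki : k ≠ i) :
    IsDiPath G 2 ![i,j,k] := by
  refine ⟨?_, ?_⟩
  · intro a b hab; fin_cases a <;> fin_cases b <;> simp_all
  · intro t; fin_cases t <;> simpa

lemma adj01 (p : DiPath G 2) : G.Adj (p.1 0) (p.1 1) := by simpa using p.2.2 0
lemma adj12 (p : DiPath G 2) : G.Adj (p.1 1) (p.1 2) := by simpa using p.2.2 1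

lemma ne20 (p : DiPath G 2) : p.1 2 ≠ p.1 0 := fun e => by
  have := p.2.1 (a₁ := 2) (a₂ := 0) (by simpa using e); simp at this

lemma ne01 (p : DiPath G 2) : p.1 0 ≠ p.1 1 := (adj01 G p).ne

lemma isDiPath3_iff (i j k l : V) (hp : IsDiPath G 2 ![i,j,k]) :
    IsDiPath G 3 ![i,j,k,l] ↔ G.Adj k l ∧ l ≠ i ∧ l ≠ j := by
  have hij : G.Adj i j := by simpa using hp.2 0
  have hjk : G.Adj j k := by simpa using hp.2 1
  have hik : i ≠ k := fun e => by
    have := hp.1 (a₁ := 0) (a₂ := 2) (by simpa using e); simp at this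
  constructor
  · intro h
    refine ⟨by simpa using h.2 2, fun e => ?_, fun e => ?_⟩
    · have := h.1 (a₁ := 3) (a₂ := 0) (by simpa using e); simp at this
    · have := h.1 (a₁ := 3) (a₂ := 1) (by simpa using e); simp at this
  · rintro ⟨hkl, hli, hlj⟩
    refine ⟨?_, ?_⟩
    · intro a b hab
      have h1 : i ≠ j := hij.ne
      have h2 : j ≠ k := hjk.ne
      have h3 : k ≠ l := hkl.ne
      fin_cases a <;> fin_cases b <;> simp_all
    · intro t; fin_cases t <;> simpa

lemma snoc3 (i j k l : V) : (Fin.snoc ![i,j,k] l : Fin 4 → V) = ![i,j,k,l] := by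
  funext t; fin_cases t <;> simp [Fin.snoc] <;> rfl

lemma sum_subtype_dite {α : Type*} [Fintype α] (p : α → Prop) [DecidablePred p]
    (F : Subtype p → ℂ) :
    ∑ x : Subtype p, F x = ∑ a : α, if h : p a then F ⟨a, h⟩ else 0 := by
  have h1 : ∑ x : Subtype p, F x
      = ∑ x : Subtype p, (fun a => if h : p a then F ⟨a, h⟩ else 0) ↑x := by
    refine Finset.sum_congr rfl fun x _ => ?_
    simp [x.2]
  exact h1.trans ((Finset.sum_subtype (Finset.univ.filter p) (by simp)
      (fun a => if h : p a then F ⟨a, h⟩ else 0)).symm.trans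
    (Finset.sum_subset (Finset.filter_subset _ _)
      (fun a _ ha => dif_neg (by simpa using ha))))

lemma sum_dipath2 {a b : V} (hab : G.Adj a b) (F : DiPath G 2 → ℂ) :
    (∑ q : DiPath G 2, if q.1 0 = a ∧ q.1 1 = b then F q else 0)
      = ∑ l : V, if h : G.Adj b l ∧ l ≠ a then F ⟨![a,b,l], mkPath G hab h.1 h.2⟩ else 0 := by
  have hmem : ∀ q : DiPath G 2, q.1 0 = a → q.1 1 = b → G.Adj b (q.1 2) ∧ q.1 2 ≠ a :=
    fun q h0 h1 => ⟨h1 ▸ adj12 G q, h0 ▸ ne20 G q⟩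
  have hback : ∀ q : DiPath G 2, q.1 0 = a → q.1 1 = b →
      ∀ hp, (⟨![a, b, q.1 2], hp⟩ : DiPath G 2) = q := by
    intro q h0 h1 hp
    refine Subtype.ext (funext fun t => ?_)
    fin_cases t
    · simpa using h0.symm
    · simpa using h1.symm
    · simp
  rw [← Finset.sum_filter]
  have hr : (∑ l : V, if h : G.Adj b l ∧ l ≠ a then F ⟨![a,b,l], mkPath G hab h.1 h.2⟩ else 0)
      = ∑ l ∈ Finset.univ.filter (fun l => G.Adj b l ∧ l ≠ a),
          if h : G.Adj b l ∧ l ≠ a then F ⟨![a,b,l], mkPath G hab h.1 h.2⟩ else 0 :=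
    (Finset.sum_subset (Finset.filter_subset _ _)
      (fun l _ hl => dif_neg (by simpa using hl))).symm
  rw [hr]
  refine Finset.sum_bij' (i := fun q _ => q.1 2)
    (j := fun l hl => ⟨![a,b,l], mkPath G hab (by simp at hl; exact hl.1)
      (by simp at hl; exact hl.2)⟩) ?_ ?_ ?_ ?_ ?_
  · intro q hq
    simp only [Finset.mem_filter, Finset.mem_univ, true_and] at hq ⊢
    exact hmem q hq.1 hq.2
  · intro l hl; simp
  · intro q hq
    simp only [Finset.mem_filter, Finset.mem_univ, true_and] at hq
    exact hback q hq.1 hq.2 _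
  · intro l hl; simp
  · intro q hq
    simp only [Finset.mem_filter, Finset.mem_univ, true_and] at hq
    rw [dif_pos (hmem q hq.1 hq.2)]
    exact congrArg F (hback q hq.1 hq.2 _).symm

lemma sum_diEdge (F : DiEdge G → ℂ) :
    ∑ f : DiEdge G, F f
      = ∑ a : V, ∑ b : V, if h : G.Adj a b then F ⟨(a,b), h⟩ else 0 := by
  rw [sum_subtype_dite (fun e : V × V => G.Adj e.1 e.2) F]
  exact Fintype.sum_prod_type (f := fun ab : V × V => if h : G.Adj ab.1 ab.2 then F ⟨ab, h⟩ else 0)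

lemma Bmat_mulVec (x : DiEdge G → ℂ) {i j : V} (hij : G.Adj i j) :
    (Bmat G *ᵥ x) ⟨(i,j),hij⟩
      = ∑ k : V, if h : G.Adj j k ∧ k ≠ i then x ⟨(j, k), h.1⟩ else 0 := by
  show ∑ f : DiEdge G, Bmat G ⟨(i,j),hij⟩ f * x f = _
  rw [sum_diEdge]
  rw [Finset.sum_eq_single_of_mem j (Finset.mem_univ j)]
  · refine Finset.sum_congr rfl fun k _ => ?_
    by_cases h1 : G.Adj j k
    · by_cases h2 : k ≠ i
      · rw [dif_pos h1, dif_pos ⟨h1, h2⟩]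
        simp [Bmat, h1, h2]
      · rw [dif_pos h1, dif_neg (by tauto)]
        simp [Bmat, h2]
    · rw [dif_neg h1, dif_neg (by tauto)]
  · intro a _ ha
    refine Finset.sum_eq_zero fun k _ => ?_
    by_cases h1 : G.Adj a k
    · rw [dif_pos h1]; simp [Bmat, Ne.symm ha]
    · rw [dif_neg h1]

lemma dB1_mulVec (x : DiEdge G → ℂ) {i j : V} (hij : G.Adj i j) :
    (dB1 G *ᵥ x) ⟨(i,j),hij⟩
      = ∑ k : V, if h : G.Adj j k ∧ k ≠ i ∧ G.Adj i k then x ⟨(j, k), h.1⟩ else 0 := by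
  show ∑ f : DiEdge G, dB1 G ⟨(i,j),hij⟩ f * x f = _
  rw [sum_diEdge]
  rw [Finset.sum_eq_single_of_mem j (Finset.mem_univ j)]
  · refine Finset.sum_congr rfl fun k _ => ?_
    by_cases h1 : G.Adj j k
    · by_cases h2 : k ≠ i ∧ G.Adj i k
      · rw [dif_pos h1, dif_pos ⟨h1, h2⟩]
        simp [dB1, h1, h2.1, h2.2]
      · rw [dif_pos h1, dif_neg (by tauto)]
        rw [not_and_or] at h2
        rcases h2 with h2 | h2 <;> simp [dB1, h2]
    · rw [dif_neg h1, dif_neg (by tauto)]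
  · intro a _ ha
    refine Finset.sum_eq_zero fun k _ => ?_
    by_cases h1 : G.Adj a k
    · rw [dif_pos h1]; simp [dB1, Ne.symm ha]
    · rw [dif_neg h1]

lemma dB2_mulVec (x : DiEdge G → ℂ) {i j : V} (hij : G.Adj i j) :
    (dB2 G *ᵥ x) ⟨(i,j),hij⟩
      = ∑ k : V, if h : G.Adj j k ∧ G.Adj k i then x ⟨(k, i), h.2⟩ else 0 := by
  show ∑ f : DiEdge G, dB2 G ⟨(i,j),hij⟩ f * x f = _
  rw [sum_diEdge]
  refine Finset.sum_congr rfl fun k _ => ?_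
  rw [Finset.sum_eq_single_of_mem i (Finset.mem_univ i)]
  · by_cases h1 : G.Adj k i
    · by_cases h2 : G.Adj j k
      · rw [dif_pos h1, dif_pos ⟨h2, h1⟩]
        simp [dB2, h2]
      · rw [dif_pos h1, dif_neg (by tauto)]
        simp [dB2, h2]
    · rw [dif_neg h1, dif_neg (by tauto)]
  · intro b _ hb
    by_cases h1 : G.Adj k b
    · rw [dif_pos h1]; simp [dB2, hb]
    · rw [dif_neg h1]

lemma Ddel_mulVec (x : DiEdge G → ℂ) {i j : V} (hij : G.Adj i j) :
    (Ddel G *ᵥ x) ⟨(i,j),hij⟩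
      = ∑ k : V, if G.Adj i k ∧ G.Adj j k then x ⟨(i,j),hij⟩ else 0 := by
  rw [Ddel, Matrix.mulVec_diagonal, ← Finset.sum_filter, Finset.sum_const, nsmul_eq_mul]

lemma psiOf_mk (lam : ℂ) (x : DiEdge G → ℂ) {i j k : V} (hij : G.Adj i j)
    (hjk : G.Adj j k) (hki : k ≠ i) (hp : IsDiPath G 2 ![i,j,k]) :
    psiOf G lam x ⟨![i,j,k], hp⟩ =
      if h : G.Adj i k then
        (lam^2 * x ⟨(j,k),hjk⟩ - lam * x ⟨(k,i),h.symm⟩ + x ⟨(i,j),hij⟩) / (lam^3+1)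
      else lam⁻¹ * x ⟨(j,k),hjk⟩ := by
  simp [psiOf]
  rfl

lemma xvec_psiOf (lam : ℂ) (h0 : lam ≠ 0) (h3 : lam^3 + 1 ≠ 0) (x : DiEdge G → ℂ)
    (hx : ∀ e, lam^3 * (Bmat G *ᵥ x) e - lam^2 * (dB2 G *ᵥ x) e
        + lam * ((Ddel G *ᵥ x) e - x e) + ((Bmat G *ᵥ x) e - (dB1 G *ᵥ x) e)
        = lam^4 * x e) :
    xvec G (psiOf G lam x) = x := by
  funext e
  obtain ⟨⟨i, j⟩, hij⟩ := e
  replace hij : G.Adj i j := hij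
  have hS : xvec G (psiOf G lam x) ⟨(i,j),hij⟩
      = ∑ l : V, if h : G.Adj j l ∧ l ≠ i then psiOf G lam x ⟨![i,j,l], mkPath G hij h.1 h.2⟩ else 0 := by
    rw [xvec, Finset.sum_filter]
    exact sum_dipath2 G hij (psiOf G lam x)
  rw [hS]
  refine mul_left_cancel₀ (mul_ne_zero h0 h3) ?_
  have key : lam * (lam^3+1) * (∑ l : V, if h : G.Adj j l ∧ l ≠ i then psiOf G lam x ⟨![i,j,l], mkPath G hij h.1 h.2⟩ else 0)
      = lam^3 * (Bmat G *ᵥ x) ⟨(i,j),hij⟩ - lam^2 * (dB2 G *ᵥ x) ⟨(i,j),hij⟩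
        + lam * (Ddel G *ᵥ x) ⟨(i,j),hij⟩
        + ((Bmat G *ᵥ x) ⟨(i,j),hij⟩ - (dB1 G *ᵥ x) ⟨(i,j),hij⟩) := by
    rw [Bmat_mulVec G x hij, dB1_mulVec G x hij, dB2_mulVec G x hij, Ddel_mulVec G x hij, Finset.mul_sum,
      Finset.mul_sum, Finset.mul_sum, Finset.mul_sum, ← Finset.sum_sub_distrib,
      ← Finset.sum_sub_distrib, ← Finset.sum_add_distrib, ← Finset.sum_add_distrib]
    refine Finset.sum_congr rfl fun k _ => ?_
    by_cases hjk : G.Adj j k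
    · by_cases hki : k = i
      · subst hki
        simp [G.irrefl]
      · rw [dif_pos ⟨hjk, hki⟩, dif_pos ⟨hjk, hki⟩,
          psiOf_mk G lam x (i := i) (j := j) (k := k) hij hjk hki]
        by_cases hik : G.Adj i k
        · rw [dif_pos hik, dif_pos ⟨hjk, hik.symm⟩, if_pos ⟨hik, hjk⟩, dif_pos ⟨hjk, hki, hik⟩]
          field_simp
          ring
        · rw [dif_neg hik, dif_neg (fun c => hik c.2.symm), if_neg (by tauto),
            dif_neg (by tauto)]
          field_simp
          ring
    · rw [dif_neg (by tauto), dif_neg (by tauto), dif_neg (by tauto),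
        if_neg (by tauto), dif_neg (by tauto)]
      ring
  rw [key]
  have := hx ⟨(i,j),hij⟩
  linear_combination this


lemma eta3' {W : Type*} (f : Fin 3 → W) : f = ![f 0, f 1, f 2] := by
  funext t; fin_cases t <;> rfl

lemma nbm_eigen (lam : ℂ) (h0 : lam ≠ 0) (h3 : lam^3 + 1 ≠ 0) (x : DiEdge G → ℂ)
    (hcons : xvec G (psiOf G lam x) = x) :
    NBM G 2 *ᵥ psiOf G lam x = lam • psiOf G lam x := by
  suffices H : ∀ (i j k : V) (hp : IsDiPath G 2 ![i,j,k]),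
      (NBM G 2 *ᵥ psiOf G lam x) ⟨![i,j,k], hp⟩
        = lam * psiOf G lam x ⟨![i,j,k], hp⟩ by
    funext p
    obtain ⟨f, hf⟩ := p
    have he : (⟨f, hf⟩ : DiPath G 2)
        = ⟨![f 0, f 1, f 2], by rw [← eta3' f]; exact hf⟩ := Subtype.ext (eta3' f)
    rw [he]
    exact H _ _ _ _
  intro i j k hp
  have hij : G.Adj i j := by simpa using hp.2 0
  have hjk : G.Adj j k := by simpa using hp.2 1
  have hki : k ≠ i := fun e => by
    have := hp.1 (a₁ := 2) (a₂ := 0) (by simpa using e); simp at this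
  -- LHS as a sum
  have hLHS : (NBM G 2 *ᵥ psiOf G lam x) ⟨![i,j,k], hp⟩
      = ∑ q : DiPath G 2, if q.1 0 = j ∧ q.1 1 = k then
          (if IsDiPath G 3 (Fin.snoc (![i,j,k] : Fin 3 → V) (q.1 (Fin.last 2)))
            then psiOf G lam x q else 0) else 0 := by
    show ∑ q : DiPath G 2, NBM G 2 ⟨![i,j,k], hp⟩ q * psiOf G lam x q = _
    refine Finset.sum_congr rfl fun q _ => ?_
    rw [NBM]
    by_cases h1 : q.1 0 = j ∧ q.1 1 = k
    · have hfirst : ∀ t : Fin 2, q.1 t.castSucc = (![i,j,k] : Fin 3 → V) t.succ := by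
        intro t; fin_cases t
        · simpa using h1.1
        · simpa using h1.2
      by_cases h2 : IsDiPath G 3 (Fin.snoc (![i,j,k] : Fin 3 → V) (q.1 (Fin.last 2)))
      · rw [if_pos ⟨hfirst, h2⟩, if_pos h1, if_pos h2, one_mul]
      · rw [if_neg (fun c => h2 c.2), if_pos h1, if_neg h2, zero_mul]
    · rw [if_neg, if_neg h1, zero_mul]
      intro c
      exact h1 ⟨by simpa using c.1 0, by simpa using c.1 1⟩
  rw [hLHS, sum_dipath2 G hjk]
  have hstep : ∀ l : V,
      (if h : G.Adj k l ∧ l ≠ j then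
        (if IsDiPath G 3 (Fin.snoc (![i,j,k] : Fin 3 → V) ((![j,k,l] : Fin 3 → V) (Fin.last 2)))
          then psiOf G lam x ⟨![j,k,l], mkPath G hjk h.1 h.2⟩ else 0) else 0)
      = (if h : G.Adj k l ∧ l ≠ j then psiOf G lam x ⟨![j,k,l], mkPath G hjk h.1 h.2⟩ else 0)
        - (if l = i then (if h : G.Adj k l ∧ l ≠ j then
            psiOf G lam x ⟨![j,k,l], mkPath G hjk h.1 h.2⟩ else 0) else 0) := by
    intro l
    simp only [show ((![j,k,l] : Fin 3 → V) (Fin.last 2)) = l from rfl, snoc3,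
      isDiPath3_iff G i j k l hp]
    by_cases h1 : G.Adj k l ∧ l ≠ j
    · rw [dif_pos h1, dif_pos h1]
      by_cases h2 : l = i
      · subst h2
        rw [if_neg (fun c => c.2.1 rfl), if_pos rfl]
        ring
      · rw [if_pos ⟨h1.1, h2, h1.2⟩, if_neg h2]
        ring
    · rw [dif_neg h1, dif_neg h1]
      by_cases h2 : l = i <;> simp [h2, h1]
  rw [Finset.sum_congr rfl (fun l _ => hstep l), Finset.sum_sub_distrib]
  have hA : (∑ l : V, if h : G.Adj k l ∧ l ≠ j then
      psiOf G lam x ⟨![j,k,l], mkPath G hjk h.1 h.2⟩ else 0) = x ⟨(j,k), hjk⟩ := by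
    rw [← sum_dipath2 G hjk (psiOf G lam x), ← Finset.sum_filter]
    have := congrFun hcons ⟨(j,k), hjk⟩
    rw [xvec] at this
    exact this
  rw [hA, Finset.sum_ite_eq' Finset.univ i, if_pos (Finset.mem_univ i)]
  rw [psiOf_mk G lam x (i := i) (j := j) (k := k) hij hjk hki hp]
  by_cases hik : G.Adj i k
  · rw [dif_pos ⟨hik.symm, hij.ne⟩, dif_pos hik,
      psiOf_mk G lam x (i := j) (j := k) (k := i) hjk hik.symm hij.ne (mkPath G hjk hik.symm hij.ne),
      dif_pos hij.symm]
    field_simp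
    ring
  · rw [dif_neg (fun c => hik (c.1.symm)), dif_neg hik]
    field_simp
    simp

end AuxLemmas

/-- **Theorem 2, part (ii).** Every complex eigenvalue `λ` of `M` with `λ ≠ 0` and
`λ³ ≠ -1` is also an eigenvalue of the 2nd-order non-backtracking matrix `B^(2)` of `G`. -/
theorem mem_spectrum_nbm_of_mem_spectrum_M (G : SimpleGraph V) [DecidableRel G.Adj]
    (lam : ℂ) (h0 : lam ≠ 0) (h3 : lam ^ 3 ≠ -1) (h : lam ∈ spectrum ℂ (Mmat G)) :
    lam ∈ spectrum ℂ (NBM G 2) := by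
  have h3' : lam ^ 3 + 1 ≠ 0 := fun c => h3 (by linear_combination c)
  obtain ⟨z, hz0, hz⟩ := (spec_iff (Mmat G) lam).1 h
  set z1 : DiEdge G → ℂ := fun e => z (.inl (.inl e)) with hz1
  set z2 : DiEdge G → ℂ := fun e => z (.inl (.inr e)) with hz2
  set z3 : DiEdge G → ℂ := fun e => z (.inr (.inl e)) with hz3
  set z4 : DiEdge G → ℂ := fun e => z (.inr (.inr e)) with hz4
  have hzsplit : z = Sum.elim (Sum.elim z1 z2) (Sum.elim z3 z4) := by
    funext t; rcases t with (e|e)|(e|e) <;> rfl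
  rw [hzsplit] at hz
  rw [Mmat] at hz
  simp only [Matrix.fromBlocks_mulVec] at hz
  have row1 : ∀ e, (Bmat G *ᵥ z1) e + (-(dB2 G) *ᵥ z2) e
      + ((Ddel G - 1) *ᵥ z3) e + ((Bmat G - dB1 G) *ᵥ z4) e = lam * z1 e := by
    intro e
    have := congrFun hz (.inl (.inl e))
    simp at this
    linear_combination this
  have row2 : ∀ e, z1 e = lam * z2 e := by
    intro e
    have := congrFun hz (.inl (.inr e))
    simpa [Matrix.one_mulVec, Matrix.zero_mulVec] using this
  have row3 : ∀ e, z2 e = lam * z3 e := by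
    intro e
    have := congrFun hz (.inr (.inl e))
    simpa [Matrix.one_mulVec, Matrix.zero_mulVec] using this
  have row4 : ∀ e, z3 e = lam * z4 e := by
    intro e
    have := congrFun hz (.inr (.inr e))
    simpa [Matrix.one_mulVec, Matrix.zero_mulVec] using this
  have hZ2 : z2 = lam⁻¹ • z1 := by
    funext e; have := row2 e
    simp only [Pi.smul_apply, smul_eq_mul]
    field_simp
    linear_combination -this
  have hZ3 : z3 = (lam^2)⁻¹ • z1 := by
    funext e; have h2 := row2 e; have h3 := row3 e
    simp only [Pi.smul_apply, smul_eq_mul]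
    field_simp
    linear_combination -(lam * h3 + h2)
  have hZ4 : z4 = (lam^3)⁻¹ • z1 := by
    funext e; have h2 := row2 e; have h3 := row3 e; have h4 := row4 e
    simp only [Pi.smul_apply, smul_eq_mul]
    field_simp
    linear_combination -(lam^2 * h4 + lam * h3 + h2)
  have hx : ∀ e, lam ^ 3 * (Bmat G *ᵥ z1) e - lam ^ 2 * (dB2 G *ᵥ z1) e
      + lam * ((Ddel G *ᵥ z1) e - z1 e) + ((Bmat G *ᵥ z1) e - (dB1 G *ᵥ z1) e)
      = lam ^ 4 * z1 e := by
    intro e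
    have h1 := row1 e
    rw [hZ2, hZ3, hZ4] at h1
    simp only [Matrix.mulVec_smul, Matrix.neg_mulVec, Matrix.sub_mulVec,
      Matrix.one_mulVec, Pi.smul_apply, Pi.neg_apply, Pi.sub_apply, smul_eq_mul] at h1
    field_simp at h1
    refine mul_left_cancel₀ (pow_ne_zero 3 h0) ?_
    linear_combination lam ^ 3 * h1
  have hcons : xvec G (psiOf G lam z1) = z1 := xvec_psiOf G lam h0 h3' z1 hx
  have heig := nbm_eigen G lam h0 h3' z1 hcons
  refine (spec_iff (NBM G 2) lam).2 ⟨psiOf G lam z1, ?_, heig⟩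
  intro hψ0
  apply hz0
  have hx0 : z1 = 0 := by
    rw [← hcons, hψ0]
    funext e
    simp [xvec]
  rw [hzsplit, hx0, hZ2, hZ3, hZ4, hx0]
  simp


end PercNB
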